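/- Let n ≥ 1. Let a, b : ℝ × ℝⁿ → ℂ be twice continuously differentiable, A = (A₁,…,Aₙ) : ℝ × ℝⁿ → ℝⁿ be continuously differentiable, q : ℝ × ℝⁿ → ℂ be continuous, and ψ : ℝⁿ → ℝ be twice continuously differentiable. Define the Euclidean magnetic Laplacian Δ_A u(t,x) = Σ_{j=1}^n ( ∂_{x_j} + i A_j(t,x) )( ∂_{x_j}u(t,x) + i A_j(t,x) u(t,x) ) (the outer ∂_{x_j} acting on the function x ↦ ∂_{x_j}u + iA_j u) and the operator P u = i ∂_t u + Δ_A u + q·u. Assume the eikonal equation Σ_{j=1}^n (∂_{x_j}ψ(x))² = 1 for all x ∈ ℝⁿ, and the transport equations 2i Σ_j ∂_{x_j}ψ·∂_{x_j}a + i(Σ_j ∂²_{x_j x_j}ψ)·a − 2(Σ_j A_j ∂_{x_j}ψ)·a = 0 and 2i Σ_j ∂_{x_j}ψ·∂_{x_j}b + i(Σ_j ∂²_{x_j x_j}ψ)·b − 2(Σ_j A_j ∂_{x_j}ψ)·b = −P a, at every (t,x). Then for every real λ ≠ 0 and every (t,x) ∈ ℝ × ℝⁿ, P( (s,y) ↦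 exp(iλ(ψ(y) − λ s))·( a(s,y) + b(s,y)/λ ) )(t,x) = exp(iλ(ψ(x) − λ t)) · P b (t,x) / λ. -/

import Mathlib

open scoped BigOperators

variable {n : ℕ}

/-- Partial derivative in the time variable of a function on `ℝ × ℝⁿ`. -/
noncomputable def pt (u : ℝ × (Fin n → ℝ) → ℂ) (p : ℝ × (Fin n → ℝ)) : ℂ :=
  fderiv ℝ u p (1, 0)

/-- Partial derivative in the `j`-th space variable of a `ℂ`-valued function on `ℝ × ℝⁿ`. -/
noncomputable def px (j : Fin n) (u : ℝ × (Fin n → ℝ) → ℂ) (p : ℝ × (Fin n → ℝ)) : ℂ :=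
  fderiv ℝ u p (0, Pi.single j 1)

/-- Partial derivative in the `j`-th variable of an `ℝ`-valued function on `ℝⁿ`. -/
noncomputable def pxs (j : Fin n) (ψ : (Fin n → ℝ) → ℝ) (x : Fin n → ℝ) : ℝ :=
  fderiv ℝ ψ x (Pi.single j 1)

/-- The Euclidean magnetic Laplacian
`Δ_A u = Σ_j (∂_{x_j} + i A_j)(∂_{x_j} u + i A_j u)`. -/
noncomputable def magLap (A : ℝ × (Fin n → ℝ) → Fin n → ℝ)
    (u : ℝ × (Fin n → ℝ) → ℂ) (p : ℝ × (Fin n → ℝ)) : ℂ :=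
  ∑ j : Fin n,
    (px j (fun r => px j u r + Complex.I * (A r j : ℂ) * u r) p
      + Complex.I * (A p j : ℂ) * (px j u p + Complex.I * (A p j : ℂ) * u p))

/-- The magnetic Schrödinger operator `P u = i ∂_t u + Δ_A u + q u`. -/
noncomputable def schrodingerOp (A : ℝ × (Fin n → ℝ) → Fin n → ℝ)
    (q : ℝ × (Fin n → ℝ) → ℂ) (u : ℝ × (Fin n → ℝ) → ℂ) (p : ℝ × (Fin n → ℝ)) : ℂ :=
  Complex.I * pt u p + magLap A u p + q p * u p

section helper
variable {u v : ℝ × (Fin n → ℝ) → ℂ} {p : ℝ × (Fin n → ℝ)} {j : Fin n}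

lemma pt_add' (hu : DifferentiableAt ℝ u p) (hv : DifferentiableAt ℝ v p) :
    pt (fun r => u r + v r) p = pt u p + pt v p := by
  simp [pt, fderiv_fun_add hu hv]

lemma px_add' (hu : DifferentiableAt ℝ u p) (hv : DifferentiableAt ℝ v p) :
    px j (fun r => u r + v r) p = px j u p + px j v p := by
  simp [px, fderiv_fun_add hu hv]

lemma pt_mul' (hu : DifferentiableAt ℝ u p) (hv : DifferentiableAt ℝ v p) :
    pt (fun r => u r * v r) p = pt u p * v p + u p * pt v p := by
  simp only [pt, fderiv_fun_mul hu hv]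
  simp [smul_eq_mul]
  ring

lemma px_mul' (hu : DifferentiableAt ℝ u p) (hv : DifferentiableAt ℝ v p) :
    px j (fun r => u r * v r) p = px j u p * v p + u p * px j v p := by
  simp only [px, fderiv_fun_mul hu hv]
  simp [smul_eq_mul]
  ring

lemma pt_const_mul' (c : ℂ) (hu : DifferentiableAt ℝ u p) :
    pt (fun r => c * u r) p = c * pt u p := by
  simp [pt, fderiv_const_mul hu]

lemma px_const_mul' (c : ℂ) (hu : DifferentiableAt ℝ u p) :
    px j (fun r => c * u r) p = c * px j u p := by
  simp [px, fderiv_const_mul hu]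

lemma pt_div_const' (c : ℂ) (hu : DifferentiableAt ℝ u p) :
    pt (fun r => u r / c) p = pt u p / c := by
  simp only [div_eq_mul_inv, pt, fderiv_mul_const hu]
  simp [smul_eq_mul, mul_comm]

lemma px_div_const' (c : ℂ) (hu : DifferentiableAt ℝ u p) :
    px j (fun r => u r / c) p = px j u p / c := by
  simp only [div_eq_mul_inv, px, fderiv_mul_const hu]
  simp [smul_eq_mul, mul_comm]

lemma px_ofReal_snd {f : (Fin n → ℝ) → ℝ} (hf : DifferentiableAt ℝ f p.2) (j : Fin n) :
    px j (fun r : ℝ × (Fin n → ℝ) => ((f r.2 : ℝ) : ℂ)) p = ((pxs j f p.2 : ℝ) : ℂ) := by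
  have h : HasFDerivAt (fun r : ℝ × (Fin n → ℝ) => ((f r.2 : ℝ) : ℂ))
      (Complex.ofRealCLM.comp ((fderiv ℝ f p.2).comp
        (ContinuousLinearMap.snd ℝ ℝ (Fin n → ℝ)))) p :=
    Complex.ofRealCLM.hasFDerivAt.comp p ((hf.hasFDerivAt).comp p hasFDerivAt_snd)
  simp [px, h.fderiv, pxs]

lemma Ewkb_hasFDerivAt (lam : ℝ) {ψ : (Fin n → ℝ) → ℝ} (hψ : ContDiff ℝ 2 ψ)
    (p : ℝ × (Fin n → ℝ)) :
    HasFDerivAt (fun r : ℝ × (Fin n → ℝ) =>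
        Complex.exp (Complex.I * (lam : ℂ) * ((ψ r.2 : ℂ) - (lam : ℂ) * (r.1 : ℂ))))
      ((Complex.exp (Complex.I * (lam : ℂ) * ((ψ p.2 : ℂ) - (lam : ℂ) * (p.1 : ℂ)))
          * (Complex.I * (lam : ℂ))) •
        (Complex.ofRealCLM.comp
          ((fderiv ℝ ψ p.2).comp (ContinuousLinearMap.snd ℝ ℝ (Fin n → ℝ))
            - lam • (ContinuousLinearMap.fst ℝ ℝ (Fin n → ℝ))))) p := by
  have hψd : HasFDerivAt ψ (fderiv ℝ ψ p.2) p.2 :=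
    (hψ.differentiable two_ne_zero p.2).hasFDerivAt
  have h0 : HasFDerivAt (fun r : ℝ × (Fin n → ℝ) => ψ r.2 - lam * r.1)
      ((fderiv ℝ ψ p.2).comp (ContinuousLinearMap.snd ℝ ℝ (Fin n → ℝ))
        - lam • (ContinuousLinearMap.fst ℝ ℝ (Fin n → ℝ))) p :=
    (hψd.comp p hasFDerivAt_snd).sub ((hasFDerivAt_fst).const_mul lam)
  have h1 := Complex.ofRealCLM.hasFDerivAt.comp p h0
  have h2 := h1.const_mul (Complex.I * (lam : ℂ))
  have h3 := h2.cexp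
  have hfe : (fun r : ℝ × (Fin n → ℝ) =>
      Complex.exp (Complex.I * (lam : ℂ) * ((ψ r.2 : ℂ) - (lam : ℂ) * (r.1 : ℂ))))
      = fun r : ℝ × (Fin n → ℝ) =>
        Complex.exp (Complex.I * (lam : ℂ) * ((ψ r.2 - lam * r.1 : ℝ) : ℂ)) := by
    funext r; push_cast; ring_nf
  rw [hfe]
  refine h3.congr_fderiv (Eq.symm ?_)
  rw [smul_smul]
  congr 2
  simp only [Function.comp, Complex.ofRealCLM_apply]
  push_cast
  ring

variable {ψ : (Fin n → ℝ) → ℝ}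

lemma Ewkb_diff (lam : ℝ) (hψ : ContDiff ℝ 2 ψ) (p : ℝ × (Fin n → ℝ)) :
    DifferentiableAt ℝ (fun r : ℝ × (Fin n → ℝ) =>
      Complex.exp (Complex.I * (lam : ℂ) * ((ψ r.2 : ℂ) - (lam : ℂ) * (r.1 : ℂ)))) p :=
  (Ewkb_hasFDerivAt lam hψ p).differentiableAt

lemma pt_Ewkb (lam : ℝ) (hψ : ContDiff ℝ 2 ψ) (p : ℝ × (Fin n → ℝ)) :
    pt (fun r : ℝ × (Fin n → ℝ) =>
        Complex.exp (Complex.I * (lam : ℂ) * ((ψ r.2 : ℂ) - (lam : ℂ) * (r.1 : ℂ)))) p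
      = -Complex.I * (lam : ℂ) ^ 2
          * Complex.exp (Complex.I * (lam : ℂ) * ((ψ p.2 : ℂ) - (lam : ℂ) * (p.1 : ℂ))) := by
  have h := (Ewkb_hasFDerivAt lam hψ p).fderiv
  simp only [pt, h, ContinuousLinearMap.smul_apply, ContinuousLinearMap.comp_apply,
    ContinuousLinearMap.sub_apply, ContinuousLinearMap.coe_fst', ContinuousLinearMap.coe_snd',
    Complex.ofRealCLM_apply, ContinuousLinearMap.smul_apply, smul_eq_mul]
  norm_num
  ring

lemma px_Ewkb (lam : ℝ) (hψ : ContDiff ℝ 2 ψ) (j : Fin n) (p : ℝ × (Fin n → ℝ)) :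
    px j (fun r : ℝ × (Fin n → ℝ) =>
        Complex.exp (Complex.I * (lam : ℂ) * ((ψ r.2 : ℂ) - (lam : ℂ) * (r.1 : ℂ)))) p
      = Complex.I * (lam : ℂ) * ((pxs j ψ p.2 : ℝ) : ℂ)
          * Complex.exp (Complex.I * (lam : ℂ) * ((ψ p.2 : ℂ) - (lam : ℂ) * (p.1 : ℂ))) := by
  have h := (Ewkb_hasFDerivAt lam hψ p).fderiv
  simp only [px, h, ContinuousLinearMap.smul_apply, ContinuousLinearMap.comp_apply,
    ContinuousLinearMap.sub_apply, ContinuousLinearMap.coe_fst', ContinuousLinearMap.coe_snd',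
    Complex.ofRealCLM_apply, smul_eq_mul, pxs]
  norm_num
  ring

end helper

lemma wkb_key (lam : ℝ) {ψ : (Fin n → ℝ) → ℝ} (hψ : ContDiff ℝ 2 ψ)
    {A : ℝ × (Fin n → ℝ) → Fin n → ℝ} (hA : ContDiff ℝ 1 A)
    (q : ℝ × (Fin n → ℝ) → ℂ)
    (heik : ∀ x : Fin n → ℝ, ∑ j : Fin n, (pxs j ψ x) ^ 2 = 1)
    (v : ℝ × (Fin n → ℝ) → ℂ) (hv : ContDiff ℝ 2 v) (p : ℝ × (Fin n → ℝ)) :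
    schrodingerOp A q
        (fun r => Complex.exp (Complex.I * (lam : ℂ)
            * ((ψ r.2 : ℂ) - (lam : ℂ) * (r.1 : ℂ))) * v r) p
      = Complex.exp (Complex.I * (lam : ℂ) * ((ψ p.2 : ℂ) - (lam : ℂ) * (p.1 : ℂ)))
          * (schrodingerOp A q v p
            + (lam : ℂ) * (2 * Complex.I * ∑ j : Fin n, ((pxs j ψ p.2 : ℝ) : ℂ) * px j v p
                + Complex.I * (∑ j : Fin n, ((pxs j (pxs j ψ) p.2 : ℝ) : ℂ)) * v p
                - 2 * (∑ j : Fin n, ((A p j : ℝ) : ℂ) * ((pxs j ψ p.2 : ℝ) : ℂ)) * v p)) := by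
  set E : ℝ × (Fin n → ℝ) → ℂ := fun r =>
    Complex.exp (Complex.I * (lam : ℂ) * ((ψ r.2 : ℂ) - (lam : ℂ) * (r.1 : ℂ))) with hE
  have hEd : ∀ r, DifferentiableAt ℝ E r := Ewkb_diff lam hψ
  have hptE : pt E p = -Complex.I * (lam : ℂ) ^ 2 * E p := pt_Ewkb lam hψ p
  have hpxE : ∀ j r, px j E r = Complex.I * (lam : ℂ) * ((pxs j ψ r.2 : ℝ) : ℂ) * E r :=
    fun j r => px_Ewkb lam hψ j r
  have hvd : ∀ r, DifferentiableAt ℝ v r := fun r =>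
    (hv.differentiable two_ne_zero).differentiableAt
  have hψj : ∀ j : Fin n, ContDiff ℝ 1 (pxs j ψ) := fun j =>
    (hψ.fderiv_right (m := 1) (by norm_num)).clm_apply contDiff_const
  have hpxv : ∀ j : Fin n, ContDiff ℝ 1 (px j v) := fun j =>
    (hv.fderiv_right (m := 1) (by norm_num)).clm_apply contDiff_const
  have hAj : ∀ j : Fin n, ContDiff ℝ 1 (fun r : ℝ × (Fin n → ℝ) => ((A r j : ℝ) : ℂ)) :=
    fun j => Complex.ofRealCLM.contDiff.comp (contDiff_pi.mp hA j)
  have hgd : ∀ (j : Fin n) r, DifferentiableAt ℝ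
      (fun r : ℝ × (Fin n → ℝ) => px j v r + Complex.I * ((A r j : ℝ) : ℂ) * v r) r :=
    fun j r => (((hpxv j).differentiable one_ne_zero r)).add
      (((((hAj j).differentiable one_ne_zero r)).const_mul Complex.I).mul (hvd r))
  have hhc : ∀ j : Fin n, ContDiff ℝ 1
      (fun r : ℝ × (Fin n → ℝ) => ((pxs j ψ r.2 : ℝ) : ℂ)) :=
    fun j => Complex.ofRealCLM.contDiff.comp ((hψj j).comp contDiff_snd)
  have hhd : ∀ (j : Fin n) r, DifferentiableAt ℝ
      (fun r : ℝ × (Fin n → ℝ) => ((pxs j ψ r.2 : ℝ) : ℂ) * v r) r :=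
    fun j r => (((hhc j).differentiable one_ne_zero r)).mul (hvd r)
  -- derivative of E * v
  have hpxEv : ∀ (j : Fin n) r, px j (fun s => E s * v s) r
      = Complex.I * (lam : ℂ) * ((pxs j ψ r.2 : ℝ) : ℂ) * E r * v r + E r * px j v r := by
    intro j r
    rw [px_mul' (hEd r) (hvd r), hpxE j r]
  -- the inner function of the magnetic Laplacian
  have hinner : ∀ j : Fin n,
      (fun r => px j (fun s => E s * v s) r + Complex.I * ((A r j : ℝ) : ℂ) * (E r * v r))
      = fun r => E r * (px j v r + Complex.I * ((A r j : ℝ) : ℂ) * v r)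
          + (Complex.I * (lam : ℂ)) * (E r * (((pxs j ψ r.2 : ℝ) : ℂ) * v r)) := by
    intro j; funext r; rw [hpxEv j r]; ring
  have hterm : ∀ j : Fin n,
      px j (fun r => px j (fun s => E s * v s) r
          + Complex.I * ((A r j : ℝ) : ℂ) * (E r * v r)) p
        + Complex.I * ((A p j : ℝ) : ℂ) * (px j (fun s => E s * v s) p
          + Complex.I * ((A p j : ℝ) : ℂ) * (E p * v p))
      = E p * (px j (fun r => px j v r + Complex.I * ((A r j : ℝ) : ℂ) * v r) p
            + Complex.I * ((A p j : ℝ) : ℂ) * (px j v p + Complex.I * ((A p j : ℝ) : ℂ) * v p))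
        + (2 * Complex.I * (lam : ℂ) * E p) * (((pxs j ψ p.2 : ℝ) : ℂ) * px j v p)
        + (Complex.I * (lam : ℂ) * E p * v p) * ((pxs j (pxs j ψ) p.2 : ℝ) : ℂ)
        + (-(2 * (lam : ℂ) * E p * v p)) * (((A p j : ℝ) : ℂ) * ((pxs j ψ p.2 : ℝ) : ℂ))
        + (-((lam : ℂ) ^ 2 * E p * v p)) * (((pxs j ψ p.2 : ℝ) : ℂ) ^ 2) := by
    intro j
    rw [hinner j,
      px_add' ((hEd p).fun_mul (hgd j p)) (((hEd p).fun_mul (hhd j p)).const_mul _),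
      px_const_mul' _ ((hEd p).fun_mul (hhd j p)),
      px_mul' (hEd p) (hgd j p), px_mul' (hEd p) (hhd j p),
      px_mul' ((hhc j).differentiable one_ne_zero p) (hvd p),
      px_ofReal_snd ((hψj j).differentiable one_ne_zero p.2) j,
      hpxE j p, hpxEv j p]
    linear_combination (2 * (lam : ℂ) * ((pxs j ψ p.2 : ℝ) : ℂ) * ((A p j : ℝ) : ℂ) * E p * v p
      + (lam : ℂ) ^ 2 * ((pxs j ψ p.2 : ℝ) : ℂ) ^ 2 * E p * v p) * Complex.I_sq
  have heikC : (∑ j : Fin n, ((pxs j ψ p.2 : ℝ) : ℂ) ^ 2) = 1 := by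
    exact_mod_cast heik p.2
  simp only [schrodingerOp, magLap]
  rw [pt_mul' (hEd p) (hvd p), hptE]
  rw [Finset.sum_congr rfl (fun j _ => hterm j)]
  simp only [Finset.sum_add_distrib, ← Finset.mul_sum]
  rw [heikC]
  linear_combination (-(lam : ℂ) ^ 2 * E p * v p) * Complex.I_sq

/-- The WKB cancellation of Section 3 of the paper: if `ψ` solves the eikonal
equation and `a, b` solve the transport equations, then the geometric optics ansatz
`e^{iλ(ψ−λt)}(a + b/λ)` satisfies `P(e^{iλ(ψ−λt)}(a + b/λ)) = e^{iλ(ψ−λt)} P b / λ`. -/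
theorem wkb_cancellation (n : ℕ) (hn : 1 ≤ n)
    (a b : ℝ × (Fin n → ℝ) → ℂ) (A : ℝ × (Fin n → ℝ) → Fin n → ℝ)
    (q : ℝ × (Fin n → ℝ) → ℂ) (ψ : (Fin n → ℝ) → ℝ)
    (hab : ContDiff ℝ 2 a) (hb : ContDiff ℝ 2 b)
    (hA : ContDiff ℝ 1 A) (hq : Continuous q) (hψ : ContDiff ℝ 2 ψ)
    (heik : ∀ x : Fin n → ℝ, ∑ j : Fin n, (pxs j ψ x) ^ 2 = 1)
    (htransport_a : ∀ p : ℝ × (Fin n → ℝ),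
      2 * Complex.I * ∑ j : Fin n, ((pxs j ψ p.2 : ℝ) : ℂ) * px j a p
        + Complex.I * ((∑ j : Fin n, pxs j (pxs j ψ) p.2 : ℝ) : ℂ) * a p
        - 2 * ((∑ j : Fin n, A p j * pxs j ψ p.2 : ℝ) : ℂ) * a p = 0)
    (htransport_b : ∀ p : ℝ × (Fin n → ℝ),
      2 * Complex.I * ∑ j : Fin n, ((pxs j ψ p.2 : ℝ) : ℂ) * px j b p
        + Complex.I * ((∑ j : Fin n, pxs j (pxs j ψ) p.2 : ℝ) : ℂ) * b p
        - 2 * ((∑ j : Fin n, A p j * pxs j ψ p.2 : ℝ) : ℂ) * b p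
        = -(schrodingerOp A q a p)) :
    ∀ lam : ℝ, lam ≠ 0 → ∀ p : ℝ × (Fin n → ℝ),
      schrodingerOp A q
          (fun r => Complex.exp (Complex.I * (lam : ℂ)
              * ((ψ r.2 : ℂ) - (lam : ℂ) * (r.1 : ℂ))) * (a r + b r / (lam : ℂ))) p
        = Complex.exp (Complex.I * (lam : ℂ) * ((ψ p.2 : ℂ) - (lam : ℂ) * (p.1 : ℂ)))
            * schrodingerOp A q b p / (lam : ℂ) := by
  intro lam hlam p0
  have hDa : ∀ r, DifferentiableAt ℝ a r := fun r =>
    (hab.differentiable two_ne_zero).differentiableAt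
  have hDb : ∀ r, DifferentiableAt ℝ b r := fun r =>
    (hb.differentiable two_ne_zero).differentiableAt
  have hvab : ContDiff ℝ 2 (fun r => a r + b r / (lam : ℂ)) := hab.add (hb.div_const _)
  have hDbdiv : ∀ r, DifferentiableAt ℝ (fun s => b s / (lam : ℂ)) r := fun r => by
    simpa [div_eq_mul_inv] using (hDb r).mul_const ((lam : ℂ))⁻¹
  have hlamC : (lam : ℂ) ≠ 0 := by exact_mod_cast hlam
  have H := wkb_key lam hψ hA q heik (fun r => a r + b r / (lam : ℂ)) hvab p0
  beta_reduce at H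
  refine H.trans ?_
  -- linearity facts
  have hpx_ab : ∀ (j : Fin n) r, px j (fun s => a s + b s / (lam : ℂ)) r
      = px j a r + px j b r / (lam : ℂ) := by
    intro j r
    have h1 : px j (fun s => a s + b s / (lam : ℂ)) r
        = px j a r + px j (fun s => b s / (lam : ℂ)) r :=
      px_add' (hDa r) (hDbdiv r)
    have h2 : px j (fun s => b s / (lam : ℂ)) r = px j b r / (lam : ℂ) :=
      px_div_const' _ (hDb r)
    rw [h1, h2]
  have hpt_ab : pt (fun s => a s + b s / (lam : ℂ)) p0
      = pt a p0 + pt b p0 / (lam : ℂ) := by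
    have h1 : pt (fun s => a s + b s / (lam : ℂ)) p0
        = pt a p0 + pt (fun s => b s / (lam : ℂ)) p0 :=
      pt_add' (hDa p0) (hDbdiv p0)
    have h2 : pt (fun s => b s / (lam : ℂ)) p0 = pt b p0 / (lam : ℂ) :=
      pt_div_const' _ (hDb p0)
    rw [h1, h2]
  have hAj : ∀ j : Fin n, ContDiff ℝ 1 (fun r : ℝ × (Fin n → ℝ) => ((A r j : ℝ) : ℂ)) :=
    fun j => Complex.ofRealCLM.contDiff.comp (contDiff_pi.mp hA j)
  have hpxa : ∀ j : Fin n, ContDiff ℝ 1 (px j a) := fun j =>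
    (hab.fderiv_right (m := 1) (by norm_num)).clm_apply contDiff_const
  have hpxb : ∀ j : Fin n, ContDiff ℝ 1 (px j b) := fun j =>
    (hb.fderiv_right (m := 1) (by norm_num)).clm_apply contDiff_const
  have hfa : ∀ (j : Fin n) r, DifferentiableAt ℝ
      (fun r : ℝ × (Fin n → ℝ) => px j a r + Complex.I * ((A r j : ℝ) : ℂ) * a r) r :=
    fun j r => ((hpxa j).differentiable one_ne_zero r).add
      ((((hAj j).differentiable one_ne_zero r).const_mul Complex.I).mul (hDa r))
  have hfb : ∀ (j : Fin n) r, DifferentiableAt ℝ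
      (fun r : ℝ × (Fin n → ℝ) => px j b r + Complex.I * ((A r j : ℝ) : ℂ) * b r) r :=
    fun j r => ((hpxb j).differentiable one_ne_zero r).add
      ((((hAj j).differentiable one_ne_zero r).const_mul Complex.I).mul (hDb r))
  have hmag_ab : magLap A (fun s => a s + b s / (lam : ℂ)) p0
      = magLap A a p0 + magLap A b p0 / (lam : ℂ) := by
    simp only [magLap]
    rw [Finset.sum_div, ← Finset.sum_add_distrib]
    refine Finset.sum_congr rfl fun j _ => ?_
    have hfun : (fun r => px j (fun s => a s + b s / (lam : ℂ)) r
          + Complex.I * ((A r j : ℝ) : ℂ) * (a r + b r / (lam : ℂ)))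
        = fun r => (px j a r + Complex.I * ((A r j : ℝ) : ℂ) * a r)
          + (px j b r + Complex.I * ((A r j : ℝ) : ℂ) * b r) / (lam : ℂ) := by
      funext r; rw [hpx_ab j r]; ring
    have h1 : px j (fun r => px j (fun s => a s + b s / (lam : ℂ)) r
          + Complex.I * ((A r j : ℝ) : ℂ) * (a r + b r / (lam : ℂ))) p0
        = px j (fun r => px j a r + Complex.I * ((A r j : ℝ) : ℂ) * a r) p0
          + px j (fun r => (px j b r + Complex.I * ((A r j : ℝ) : ℂ) * b r) / (lam : ℂ)) p0 := by
      have hfbdiv : DifferentiableAt ℝ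
          (fun r => (px j b r + Complex.I * ((A r j : ℝ) : ℂ) * b r) / (lam : ℂ)) p0 := by
        simpa [div_eq_mul_inv] using (hfb j p0).mul_const ((lam : ℂ))⁻¹
      rw [hfun]
      exact px_add' (hfa j p0) hfbdiv
    have h2 : px j (fun r => (px j b r + Complex.I * ((A r j : ℝ) : ℂ) * b r) / (lam : ℂ)) p0
        = px j (fun r => px j b r + Complex.I * ((A r j : ℝ) : ℂ) * b r) p0 / (lam : ℂ) :=
      px_div_const' _ (hfb j p0)
    rw [h1, h2, hpx_ab j p0]
    ring
  have hS : (∑ j : Fin n, ((pxs j ψ p0.2 : ℝ) : ℂ) * px j (fun s => a s + b s / (lam : ℂ)) p0)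
      = (∑ j : Fin n, ((pxs j ψ p0.2 : ℝ) : ℂ) * px j a p0)
        + (∑ j : Fin n, ((pxs j ψ p0.2 : ℝ) : ℂ) * px j b p0) / (lam : ℂ) := by
    rw [Finset.sum_div, ← Finset.sum_add_distrib]
    refine Finset.sum_congr rfl fun j _ => ?_
    rw [hpx_ab j p0]; ring
  have hta := htransport_a p0
  have htb := htransport_b p0
  push_cast at hta htb
  simp only [schrodingerOp] at htb ⊢
  rw [hpt_ab, hmag_ab, hS]
  linear_combination (Complex.exp (Complex.I * (lam : ℂ)
        * ((ψ p0.2 : ℂ) - (lam : ℂ) * (p0.1 : ℂ))) * (lam : ℂ)) * hta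
    + Complex.exp (Complex.I * (lam : ℂ)
        * ((ψ p0.2 : ℂ) - (lam : ℂ) * (p0.1 : ℂ))) * htb
    + (Complex.exp (Complex.I * (lam : ℂ) * ((ψ p0.2 : ℂ) - (lam : ℂ) * (p0.1 : ℂ)))
        * (Complex.I * b p0 * (∑ j : Fin n, ((pxs j (pxs j ψ) p0.2 : ℝ) : ℂ))
          + 2 * Complex.I * (∑ j : Fin n, ((pxs j ψ p0.2 : ℝ) : ℂ) * px j b p0)
          - 2 * b p0 * (∑ j : Fin n, ((A p0 j : ℝ) : ℂ) * ((pxs j ψ p0.2 : ℝ) : ℂ))))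
      * (mul_inv_cancel₀ hlamC)
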